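/- Let a and b be distinct positive real numbers. Then the function f₁(k) = ((a^k + b^k)/2)^(1/k) (the power mean of order k of a and b) is strictly increasing on the set of nonzero real numbers k; that is, for all nonzero real numbers k₁ < k₂, one has ((a^{k₁} + b^{k₁})/2)^(1/k₁) < ((a^{k₂} + b^{k₂})/2)^(1/k₂). -/

import Mathlib

open Real

private lemma convex_mid {x y : ℝ} (hx : 0 ≤ x) (hy : 0 ≤ y) (hxy : x ≠ y) {r : ℝ}
    (hr : 1 < r) : ((x + y) / 2) ^ r < (x ^ r + y ^ r) / 2 := by
  have h := (strictConvexOn_rpow hr).2 (Set.mem_Ici.2 hx) (Set.mem_Ici.2 hy) hxy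
    (by norm_num : (0:ℝ) < 1/2) (by norm_num : (0:ℝ) < 1/2) (by norm_num)
  simp only [smul_eq_mul] at h
  calc ((x + y) / 2) ^ r = (1/2 * x + 1/2 * y) ^ r := by ring_nf
    _ < 1/2 * x ^ r + 1/2 * y ^ r := h
    _ = (x ^ r + y ^ r) / 2 := by ring

private lemma amgm {x y : ℝ} (hx : 0 < x) (hy : 0 < y) (hxy : x ≠ y) :
    Real.sqrt (x * y) < (x + y) / 2 := by
  have hs : Real.sqrt (x * y) = Real.sqrt x * Real.sqrt y := Real.sqrt_mul hx.le y
  have h1 : Real.sqrt x ^ 2 = x := Real.sq_sqrt hx.le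
  have h2 : Real.sqrt y ^ 2 = y := Real.sq_sqrt hy.le
  have hne : Real.sqrt x ≠ Real.sqrt y := fun h => hxy (by rw [← h1, ← h2, h])
  have hpos : 0 < (Real.sqrt x - Real.sqrt y) ^ 2 :=
    by
    have := sub_ne_zero.2 hne
    positivity
  nlinarith [hpos]

private lemma rpow_base_ne {a b : ℝ} (ha : 0 < a) (hb : 0 < b) (hab : a ≠ b) {k : ℝ}
    (hk : k ≠ 0) : a ^ k ≠ b ^ k := by
  intro h
  apply hab
  have := congrArg (fun z => z ^ k⁻¹) h
  simpa [← Real.rpow_natCast, ← Real.rpow_mul ha.le, ← Real.rpow_mul hb.le,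
    mul_inv_cancel₀ hk] using this

private lemma pm_pos {a b : ℝ} (ha : 0 < a) (hb : 0 < b) (hab : a ≠ b)
    {k₁ k₂ : ℝ} (h1 : 0 < k₁) (hlt : k₁ < k₂) :
    ((a ^ k₁ + b ^ k₁) / 2) ^ (1 / k₁) < ((a ^ k₂ + b ^ k₂) / 2) ^ (1 / k₂) := by
  have h2 : 0 < k₂ := h1.trans hlt
  set x := a ^ k₁ with hxdef
  set y := b ^ k₁ with hydef
  have hx : 0 < x := Real.rpow_pos_of_pos ha _
  have hy : 0 < y := Real.rpow_pos_of_pos hb _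
  have hxy : x ≠ y := rpow_base_ne ha hb hab h1.ne'
  set r := k₂ / k₁ with hrdef
  have hr : 1 < r := (one_lt_div h1).2 hlt
  have key : ((x + y) / 2) ^ r < (x ^ r + y ^ r) / 2 := convex_mid hx.le hy.le hxy hr
  have hxr : x ^ r = a ^ k₂ := by
    rw [hxdef, ← Real.rpow_mul ha.le, hrdef]
    congr 1
    field_simp
  have hyr : y ^ r = b ^ k₂ := by
    rw [hydef, ← Real.rpow_mul hb.le, hrdef]
    congr 1
    field_simp
  have hM1 : ((a ^ k₁ + b ^ k₁) / 2) ^ (1 / k₁) = (((x + y) / 2) ^ r) ^ (1 / k₂) := by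
    rw [← Real.rpow_mul (by positivity), hrdef]
    congr 1
    field_simp
  rw [hM1, ← hxr, ← hyr]
  exact Real.rpow_lt_rpow (by positivity) key (by positivity)

private lemma G_lt_pm {a b : ℝ} (ha : 0 < a) (hb : 0 < b) (hab : a ≠ b) {k : ℝ}
    (hk : 0 < k) : Real.sqrt (a * b) < ((a ^ k + b ^ k) / 2) ^ (1 / k) := by
  have hx : 0 < a ^ k := Real.rpow_pos_of_pos ha _
  have hy : 0 < b ^ k := Real.rpow_pos_of_pos hb _
  have hxy : a ^ k ≠ b ^ k := rpow_base_ne ha hb hab hk.ne'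
  have ham : Real.sqrt (a ^ k * b ^ k) < (a ^ k + b ^ k) / 2 := amgm hx hy hxy
  have hG : (Real.sqrt (a ^ k * b ^ k)) ^ (1 / k) = Real.sqrt (a * b) := by
    rw [← Real.mul_rpow ha.le hb.le, Real.sqrt_eq_rpow, Real.sqrt_eq_rpow,
      ← Real.rpow_mul (by positivity), ← Real.rpow_mul (by positivity)]
    congr 1
    field_simp
  calc Real.sqrt (a * b) = (Real.sqrt (a ^ k * b ^ k)) ^ (1 / k) := hG.symm
    _ < ((a ^ k + b ^ k) / 2) ^ (1 / k) :=
      Real.rpow_lt_rpow (Real.sqrt_nonneg _) ham (by positivity)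

private lemma inv_rel {a b : ℝ} (ha : 0 < a) (hb : 0 < b) (k : ℝ) :
    ((a⁻¹ ^ (-k) + b⁻¹ ^ (-k)) / 2) ^ (1 / (-k)) =
      (((a ^ k + b ^ k) / 2) ^ (1 / k))⁻¹ := by
  have h1 : a⁻¹ ^ (-k) = a ^ k := by
    rw [← Real.rpow_neg_one a, ← Real.rpow_mul ha.le]
    norm_num
  have h2 : b⁻¹ ^ (-k) = b ^ k := by
    rw [← Real.rpow_neg_one b, ← Real.rpow_mul hb.le]
    norm_num
  rw [h1, h2, one_div, one_div, ← neg_inv, Real.rpow_neg (by positivity)]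

theorem power_mean_strict_mono (a b : ℝ) (ha : 0 < a) (hb : 0 < b) (hab : a ≠ b)
    (k₁ k₂ : ℝ) (hk₁ : k₁ ≠ 0) (hk₂ : k₂ ≠ 0) (hlt : k₁ < k₂) :
    ((a ^ k₁ + b ^ k₁) / 2) ^ (1 / k₁) < ((a ^ k₂ + b ^ k₂) / 2) ^ (1 / k₂) := by
  have ha' : 0 < a⁻¹ := by positivity
  have hb' : 0 < b⁻¹ := by positivity
  have hab' : a⁻¹ ≠ b⁻¹ := fun h => hab (by rw [← inv_inv a, h, inv_inv])
  have hM1 : 0 < ((a ^ k₁ + b ^ k₁) / 2) ^ (1 / k₁) := by positivity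
  have hM2 : 0 < ((a ^ k₂ + b ^ k₂) / 2) ^ (1 / k₂) := by positivity
  rcases lt_or_gt_of_ne hk₁ with hk₁n | hk₁p
  · rcases lt_or_gt_of_ne hk₂ with hk₂n | hk₂p
    · -- both negative
      have h := pm_pos ha' hb' hab' (k₁ := -k₂) (k₂ := -k₁)
        (by linarith) (by linarith)
      rw [inv_rel ha hb, inv_rel ha hb] at h
      exact (inv_lt_inv₀ hM2 hM1).1 h
    · -- k₁ < 0 < k₂
      have h1 : ((a ^ k₁ + b ^ k₁) / 2) ^ (1 / k₁) < Real.sqrt (a * b) := by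
        have h := G_lt_pm ha' hb' hab' (k := -k₁) (by linarith)
        rw [inv_rel ha hb] at h
        have hs : Real.sqrt (a⁻¹ * b⁻¹) = (Real.sqrt (a * b))⁻¹ := by
          rw [← mul_inv, Real.sqrt_inv]
        rw [hs] at h
        have hsp : 0 < Real.sqrt (a * b) := Real.sqrt_pos.2 (by positivity)
        exact (inv_lt_inv₀ hsp hM1).1 h
      exact h1.trans (G_lt_pm ha hb hab hk₂p)
  · exact pm_pos ha hb hab hk₁p hlt
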